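/- Let R be a G-graded ring such that Gr_G(R) has at least one edge but no cycles (girth infinite). Then R is G-graded local (has a unique graded maximal left ideal M), and Gr_G(R) is a star graph with center M: every other proper nontrivial graded left ideal is contained in M and no two non-central vertices are adjacent. -/

import Mathlib

variable {G R : Type*} [AddGroup G] [DecidableEq G] [Ring R]

/-- The set of proper nontrivial `G`-graded left ideals of `R`. -/
def hV (𝒜 : G → AddSubgroup R) [GradedRing 𝒜] : Set (Ideal R) :=
  {I | I ≠ ⊥ ∧ I ≠ ⊤ ∧ Ideal.IsHomogeneous 𝒜 I}

/-- The intersection graph on a set of (left) ideals: two distinct ideals are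
adjacent iff their intersection is nonzero. -/
def interGraph (V : Set (Ideal R)) : SimpleGraph V where
  Adj I J := I ≠ J ∧ (I : Ideal R) ⊓ (J : Ideal R) ≠ ⊥
  symm := ⟨fun I J ⟨h1, h2⟩ => ⟨h1.symm, by rwa [inf_comm] at h2⟩⟩
  loopless := ⟨fun I ⟨h1, _⟩ => h1 rfl⟩

lemma noTriangle {V : Type*} {Γ : SimpleGraph V} (h : Γ.egirth = ⊤) {a b c : V}
    (hab : Γ.Adj a b) (hbc : Γ.Adj b c) (hca : Γ.Adj c a) : False := by
  rw [SimpleGraph.egirth_eq_top] at h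
  refine h (SimpleGraph.Walk.cons hab (SimpleGraph.Walk.cons hbc
    (SimpleGraph.Walk.cons hca SimpleGraph.Walk.nil))) ?_
  have h1 := hab.ne
  have h2 := hbc.ne
  have h3 := hca.ne
  simp [SimpleGraph.Walk.isCycle_def, SimpleGraph.Walk.isTrail_def, Sym2.eq_iff]
  aesop

/-- Triangle freeness at the level of ideals. -/
lemma idealTri (𝒜 : G → AddSubgroup R) [GradedRing 𝒜]
    (hGirth : (interGraph (hV 𝒜)).egirth = ⊤)
    {A B C : Ideal R} (hA : A ∈ hV 𝒜) (hB : B ∈ hV 𝒜) (hC : C ∈ hV 𝒜)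
    (hAB : A ≠ B) (hBC : B ≠ C) (hCA : C ≠ A)
    (hAB' : A ⊓ B ≠ ⊥) (hBC' : B ⊓ C ≠ ⊥) (hCA' : C ⊓ A ≠ ⊥) : False := by
  refine noTriangle hGirth (a := ⟨A, hA⟩) (b := ⟨B, hB⟩) (c := ⟨C, hC⟩)
    ⟨?_, hAB'⟩ ⟨?_, hBC'⟩ ⟨?_, hCA'⟩ <;>
  simp [Subtype.ext_iff, hAB, hBC, hCA]

/-- Adjacent vertices are comparable. -/
lemma adjComparable (𝒜 : G → AddSubgroup R) [GradedRing 𝒜]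
    (hGirth : (interGraph (hV 𝒜)).egirth = ⊤)
    {A B : Ideal R} (hA : A ∈ hV 𝒜) (hB : B ∈ hV 𝒜)
    (hAB : A ≠ B) (hAB' : A ⊓ B ≠ ⊥) : A ≤ B ∨ B ≤ A := by
  by_contra hcon
  push_neg at hcon
  obtain ⟨h1, h2⟩ := hcon
  have hP : A ⊓ B ∈ hV 𝒜 := by
    refine ⟨hAB', fun h => hA.2.1 (top_le_iff.mp ?_), hA.2.2.inf hB.2.2⟩
    rw [← h]; exact inf_le_left
  refine idealTri 𝒜 hGirth hA hB hP hAB ?_ ?_ hAB' ?_ ?_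
  · intro h; exact h2 (le_trans (le_of_eq h) inf_le_left)
  · intro h; exact h1 (le_trans (le_of_eq h.symm) inf_le_right)
  · rw [inf_comm A B, ← inf_assoc, inf_idem, inf_comm]; exact hAB'
  · rw [inf_right_comm, inf_idem]; exact hAB'

/-- If `I < M` are vertices, then every vertex is contained in `M`. -/
lemma allLeM (𝒜 : G → AddSubgroup R) [GradedRing 𝒜]
    (hGirth : (interGraph (hV 𝒜)).egirth = ⊤)
    {I M : Ideal R} (hI : I ∈ hV 𝒜) (hM : M ∈ hV 𝒜) (hIM : I < M)
    {K : Ideal R} (hK : K ∈ hV 𝒜) : K ≤ M := by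
  by_contra hKM
  have hKneM : K ≠ M := fun h => hKM (le_of_eq h)
  by_cases hMK : M ≤ K
  · -- chain I < M < K gives a triangle
    have hMK' : M < K := lt_of_le_of_ne hMK (Ne.symm hKneM)
    refine idealTri 𝒜 hGirth hI hM hK (ne_of_lt hIM) (ne_of_lt hMK')
      (ne_of_gt (hIM.trans hMK')) ?_ ?_ ?_
    · rw [inf_eq_left.mpr hIM.le]; exact hI.1
    · rw [inf_eq_left.mpr hMK]; exact hM.1
    · rw [inf_eq_right.mpr (hIM.le.trans hMK)]; exact hI.1
  · -- K and M incomparable, hence K ⊓ M = ⊥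
    have hdisj : K ⊓ M = ⊥ := by
      by_contra hne
      rcases adjComparable 𝒜 hGirth hK hM hKneM hne with h | h
      · exact hKM h
      · exact hMK h
    by_cases hsup : K ⊔ M = ⊤
    · -- triangle I, M, I ⊔ K
      have hIK : I ⊓ K = ⊥ := by
        rw [← le_bot_iff, ← hdisj]
        exact inf_le_inf_right K hIM.le |>.trans (le_of_eq (inf_comm M K))
      have hQtop : I ⊔ K ≠ ⊤ := by
        intro htop
        have := sup_inf_assoc_of_le (y := K) (z := M) hIM.le
        rw [htop, top_inf_eq, hdisj, sup_bot_eq] at this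
        exact (ne_of_lt hIM) this.symm
      have hQ : I ⊔ K ∈ hV 𝒜 := by
        refine ⟨fun h => hI.1 (le_bot_iff.mp (h ▸ le_sup_left)), hQtop,
          hI.2.2.sup hK.2.2⟩
      refine idealTri 𝒜 hGirth hI hM hQ (ne_of_lt hIM) ?_ ?_ ?_ ?_ ?_
      · intro h; exact hKM (h ▸ le_sup_right)
      · intro h
        exact hKM ((le_sup_right (a := I)).trans (le_of_eq h) |>.trans hIM.le)
      · rw [inf_eq_left.mpr hIM.le]; exact hI.1
      · intro h
        exact hI.1 (le_bot_iff.mp (h ▸ le_inf hIM.le le_sup_left))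
      · rw [inf_eq_right.mpr le_sup_left]; exact hI.1
    · -- triangle I, M, K ⊔ M
      have hP : K ⊔ M ∈ hV 𝒜 := by
        refine ⟨fun h => hM.1 (le_bot_iff.mp (h ▸ le_sup_right)), hsup,
          hK.2.2.sup hM.2.2⟩
      refine idealTri 𝒜 hGirth hI hM hP (ne_of_lt hIM) ?_ ?_ ?_ ?_ ?_
      · intro h; exact hKM (h ▸ le_sup_left)
      · intro h
        exact hKM ((le_sup_left (b := M)).trans (le_of_eq h) |>.trans hIM.le)
      · rw [inf_eq_left.mpr hIM.le]; exact hI.1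
      · rw [inf_eq_left.mpr le_sup_right]; exact hM.1
      · rw [inf_eq_right.mpr (hIM.le.trans le_sup_right)]; exact hI.1

/-- If the intersection graph of graded left ideals has at least one
edge but no cycles (infinite girth), then `R` is `G`-graded local with unique graded
maximal left ideal `M`, and the graph is a star with center `M`: every other vertex
is contained in (hence adjacent to) `M`, and no two non-central vertices are
adjacent. -/
theorem stmt10 (𝒜 : G → AddSubgroup R) [GradedRing 𝒜]
    (hEdge : ∃ I J : hV 𝒜, (interGraph (hV 𝒜)).Adj I J)
    (hGirth : (interGraph (hV 𝒜)).egirth = ⊤) :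
    ∃ M ∈ hV 𝒜,
      (∀ J : Ideal R, Ideal.IsHomogeneous 𝒜 J → M < J → J = ⊤) ∧
      (∀ J : Ideal R, Ideal.IsHomogeneous 𝒜 J → J ≠ ⊤ →
        (∀ K : Ideal R, Ideal.IsHomogeneous 𝒜 K → J < K → K = ⊤) → J = M) ∧
      (∀ J ∈ hV 𝒜, J ≠ M → J ≤ M) ∧
      (∀ (hM : M ∈ hV 𝒜) (J K : hV 𝒜), J ≠ ⟨M, hM⟩ → K ≠ ⟨M, hM⟩ →
        ¬ (interGraph (hV 𝒜)).Adj J K) := by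
  obtain ⟨I, J, hne, hinf⟩ := hEdge
  have hne' : (I : Ideal R) ≠ J := fun h => hne (Subtype.ext h)
  -- obtain I₀ < M₀, both vertices
  obtain ⟨I₀, M₀, hI₀, hM₀, hlt⟩ :
      ∃ A B : Ideal R, A ∈ hV 𝒜 ∧ B ∈ hV 𝒜 ∧ A < B := by
    rcases adjComparable 𝒜 hGirth I.2 J.2 hne' hinf with h | h
    · exact ⟨I, J, I.2, J.2, lt_of_le_of_ne h hne'⟩
    · exact ⟨J, I, J.2, I.2, lt_of_le_of_ne h (Ne.symm hne')⟩
  have key : ∀ K ∈ hV 𝒜, K ≤ M₀ := fun K hK => allLeM 𝒜 hGirth hI₀ hM₀ hlt hK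
  have hmax : ∀ J : Ideal R, Ideal.IsHomogeneous 𝒜 J → M₀ < J → J = ⊤ := by
    intro J' hJ' hMJ'
    by_contra htop
    have hJ'V : J' ∈ hV 𝒜 :=
      ⟨fun h => hM₀.1 (le_bot_iff.mp (h ▸ hMJ'.le)), htop, hJ'⟩
    exact absurd (key J' hJ'V) (not_le_of_gt hMJ')
  refine ⟨M₀, hM₀, hmax, ?_, fun J hJ _ => key J hJ, ?_⟩
  · -- uniqueness of the graded maximal ideal
    intro J' hJ' hJtop hJmax
    have hJbot : J' ≠ ⊥ := by
      intro h
      subst h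
      exact hM₀.2.1 (hJmax M₀ hM₀.2.2 (bot_lt_iff_ne_bot.mpr hM₀.1))
    have hle : J' ≤ M₀ := key J' ⟨hJbot, hJtop, hJ'⟩
    rcases eq_or_lt_of_le hle with h | h
    · exact h
    · exact absurd (hJmax M₀ hM₀.2.2 h) hM₀.2.1
  · -- no edges between non-central vertices
    rintro hM J' K' hJne hKne ⟨hne2, hinf2⟩
    have hJc : (J' : Ideal R) ≠ M₀ := fun h => hJne (Subtype.ext h)
    have hKc : (K' : Ideal R) ≠ M₀ := fun h => hKne (Subtype.ext h)
    have hJle : (J' : Ideal R) ≤ M₀ := key _ J'.2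
    have hKle : (K' : Ideal R) ≤ M₀ := key _ K'.2
    have hne2' : (J' : Ideal R) ≠ K' := fun h => hne2 (Subtype.ext h)
    refine idealTri 𝒜 hGirth J'.2 K'.2 hM hne2' hKc (Ne.symm hJc) hinf2 ?_ ?_
    · rw [inf_eq_left.mpr hKle]; exact K'.2.1
    · rw [inf_eq_right.mpr hJle]; exact J'.2.1
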